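/- A finite 2-group with a unique element of order 2 is either cyclic or generalized quaternion. -/

import Mathlib

open Finset in
private lemma aux_comm_cyclic (H : Type*) [Group H] [Finite H]
    (h2 : IsPGroup 2 H) (hcomm : ∀ x y : H, x * y = y * x)
    (hu : ∀ x y : H, x ^ 2 = 1 → y ^ 2 = 1 → x = 1 ∨ y = 1 ∨ x = y) :
    IsCyclic H := by
  classical
  letI : Fintype H := Fintype.ofFinite H
  have hT : #{x : H | x ^ 2 = 1} ≤ 2 := by
    by_cases he : ∃ z : H, z ≠ 1 ∧ z ^ 2 = 1
    · obtain ⟨z, hz1, hz2⟩ := he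
      have hsub : ({x : H | x ^ 2 = 1} : Finset H) ⊆ ({1, z} : Finset H) := by
        intro x hx
        simp only [mem_filter, mem_univ, true_and] at hx
        rcases hu x z hx hz2 with h | h | h
        · simp [h]
        · exact absurd h hz1
        · simp [h]
      exact (Finset.card_le_card hsub).trans ((Finset.card_insert_le _ _).trans (by simp))
    · push_neg at he
      refine (Finset.card_le_card (fun x hx => ?_)).trans (by simp : #({1} : Finset H) ≤ 2)
      simp only [mem_filter, mem_univ, true_and] at hx
      by_contra hx1
      simp only [mem_singleton] at hx1
      exact he x hx1 hx
  -- 2-power torsion counting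
  have key : ∀ k : ℕ, #{x : H | x ^ 2 ^ k = 1} ≤ 2 ^ k := by
    intro k
    induction k with
    | zero =>
      simp only [pow_zero, pow_one]
      rw [show (filter (fun x : H => x = 1) univ) = {1} by ext x; simp]
      simp
    | succ k ih =>
      have maps : ∀ x ∈ ({x : H | x ^ 2 ^ (k+1) = 1} : Finset H),
          x ^ 2 ^ k ∈ ({x : H | x ^ 2 = 1} : Finset H) := by
        intro x hx
        simp only [mem_filter, mem_univ, true_and] at hx ⊢
        rw [← pow_mul, ← pow_succ] ; exact hx
      have := Finset.card_le_mul_card_image_of_maps_to maps (2 ^ k) ?_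
      · calc #{x : H | x ^ 2 ^ (k+1) = 1} ≤ 2 ^ k * #{x : H | x ^ 2 = 1} := this
          _ ≤ 2 ^ k * 2 := Nat.mul_le_mul_left _ hT
          _ = 2 ^ (k+1) := by ring
      · intro b _
        by_cases hb : ∃ x₀ : H, x₀ ∈ ({x : H | x ^ 2 ^ (k+1) = 1} : Finset H) ∧ x₀ ^ 2 ^ k = b
        · obtain ⟨x₀, hx₀, rfl⟩ := hb
          refine (Finset.card_le_card_of_injOn (fun x => x₀⁻¹ * x) (fun x hx => ?_)
            (fun a _ b _ h => by simpa using h)).trans ih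
          simp only [Finset.mem_coe, mem_filter, mem_univ, true_and] at hx ⊢
          letI : CommGroup H := { mul_comm := hcomm }
          rw [mul_pow, hx.2, inv_pow, inv_mul_eq_one]
        · push_neg at hb
          rw [Finset.card_eq_zero.mpr, ] 
          · positivity
          · ext x
            simp only [mem_filter, mem_univ, true_and, Finset.notMem_empty, iff_false, not_and]
            intro h1 h2
            exact absurd h2 (hb x (by simp [h1]))
  -- conclude
  refine isCyclic_of_card_pow_eq_one_le (fun n hn => ?_)
  obtain ⟨N, hN⟩ := IsPGroup.iff_card.mp h2
  set v := n.factorization 2 with hv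
  have h2v : 2 ^ v ∣ n := Nat.ordProj_dvd n 2
  calc #{x : H | x ^ n = 1} ≤ #{x : H | x ^ 2 ^ v = 1} := by
        apply Finset.card_le_card
        intro x hx
        simp only [mem_filter, mem_univ, true_and] at hx ⊢
        obtain ⟨k, hk⟩ := h2 x
        have hdvd : orderOf x ∣ 2 ^ k := orderOf_dvd_of_pow_eq_one hk
        obtain ⟨j, hjk, hj⟩ := (Nat.dvd_prime_pow Nat.prime_two).mp hdvd
        have : orderOf x ∣ n := orderOf_dvd_of_pow_eq_one hx
        have hjv : j ≤ v := by
          rw [hj] at this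
          exact (Nat.Prime.pow_dvd_iff_le_factorization Nat.prime_two hn.ne').mp this
        have hd : orderOf x ∣ 2 ^ v := hj ▸ pow_dvd_pow 2 hjv
        exact orderOf_dvd_iff_pow_eq_one.mp hd
      _ ≤ 2 ^ v := key v
      _ ≤ n := Nat.le_of_dvd hn h2v


private lemma aux_normal_center (G : Type*) [Group G] [Finite G]
    (hG : IsPGroup 2 G) (N : Subgroup G) [N.Normal] (hN : N ≠ ⊥) :
    ∃ x : G, x ∈ N ∧ x ≠ 1 ∧ ∀ g : G, g * x = x * g := by
  classical
  haveI : Fact (Nat.Prime 2) := ⟨Nat.prime_two⟩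
  have hConj : IsPGroup 2 (ConjAct G) := hG.of_equiv ConjAct.toConjAct
  have hNn : Nontrivial N := (Subgroup.nontrivial_iff_ne_bot N).mpr hN
  have hdvd : 2 ∣ Nat.card N := by
    obtain ⟨n, hn0, hn⟩ := (hG.to_subgroup N).nontrivial_iff_card.mp hNn
    exact hn ▸ dvd_pow_self 2 hn0.ne'
  have h1 : (1 : N) ∈ MulAction.fixedPoints (ConjAct G) N := by
    intro g
    apply Subtype.ext
    rw [ConjAct.Subgroup.val_conj_smul]
    simp
  obtain ⟨b, hb, hb1⟩ :=
    hConj.exists_fixed_point_of_prime_dvd_card_of_fixed_point (α := N) hdvd h1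
  refine ⟨(b : G), b.2, ?_, ?_⟩
  · intro h
    exact hb1 (Subtype.ext (by simpa using h)).symm
  · intro g
    have := hb (ConjAct.toConjAct g)
    have hv : g * (b : G) * g⁻¹ = (b : G) := by
      have := congrArg (Subtype.val) this
      rw [ConjAct.Subgroup.val_conj_smul] at this
      simpa [ConjAct.toConjAct_smul] using this
    exact mul_inv_eq_iff_eq_mul.mp hv


private lemma aux_inverts {G : Type*} [Group G] [Finite G] (aa : G) (n : ℕ) (hn : 2 ≤ n)
    (haord : orderOf aa = 2 ^ n)
    (hcent : ∀ x : G, x * aa = aa * x → x ∈ Subgroup.zpowers aa)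
    (hnorm : (Subgroup.zpowers aa).Normal)
    (huniq : ∀ x : G, x ≠ 1 → x ^ 2 = 1 → x = aa ^ (2 ^ (n - 1)))
    (bb : G) (hbA : bb ∉ Subgroup.zpowers aa) (hb2 : bb ^ 2 ∈ Subgroup.zpowers aa) :
    bb * aa * bb⁻¹ = aa⁻¹ ∧ bb ^ 2 = aa ^ (2 ^ (n - 1)) := by
  classical
  -- basic tools
  have hdvd : ∀ k : ℤ, aa ^ k = 1 ↔ (2 : ℤ) ^ n ∣ k := by
    intro k
    rw [← orderOf_dvd_iff_zpow_eq_one, haord]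
    push_cast
    rfl
  have hcong : ∀ k l : ℤ, (2 : ℤ) ^ n ∣ k - l → aa ^ k = aa ^ l := by
    intro k l h
    have : aa ^ (k - l) = 1 := (hdvd _).mpr h
    rw [zpow_sub] at this
    exact mul_inv_eq_one.mp this
  have hconj : ∀ (g : G) (t : ℤ), g * aa * g⁻¹ = aa ^ t →
      ∀ k : ℤ, g * aa ^ k * g⁻¹ = aa ^ (t * k) := by
    intro g t ht k
    rw [← conj_zpow, ht, ← zpow_mul]
  -- the exponent of conjugation
  obtain ⟨s, hs⟩ := Subgroup.mem_zpowers_iff.mp (hnorm.conj_mem aa (Subgroup.mem_zpowers aa) bb)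
  obtain ⟨e, he⟩ := Subgroup.mem_zpowers_iff.mp hb2
  have hsrel : bb * aa * bb⁻¹ = aa ^ s := hs.symm
  have herel : bb ^ 2 = aa ^ e := he.symm
  have hbb2 : bb ^ 2 = bb * bb := sq bb
  -- F2 : 2^n ∣ s^2 - 1
  have hF2 : (2 : ℤ) ^ n ∣ s * s - 1 := by
    have h1 : bb * (bb * aa * bb⁻¹) * bb⁻¹ = aa ^ (s * s) := by
      rw [hsrel]; exact hconj bb s hsrel s
    have h2 : bb * (bb * aa * bb⁻¹) * bb⁻¹ = (bb ^ 2) * aa * (bb ^ 2)⁻¹ := by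
      rw [hbb2]; group
    have h3 : (bb ^ 2) * aa * (bb ^ 2)⁻¹ = aa := by
      rw [herel]
      have : aa ^ e * aa = aa * aa ^ e := by
        rw [← zpow_one_add, ← zpow_add_one]; ring_nf
      rw [this]; group
    have : aa ^ (s * s) = aa ^ (1 : ℤ) := by rw [← h1, h2, h3, zpow_one]
    rw [← hdvd]
    rw [zpow_sub, this, zpow_one]
    group
  -- F3 : 2^n ∣ e * (s - 1)
  have hF3 : (2 : ℤ) ^ n ∣ e * (s - 1) := by
    have h1 : bb * aa ^ e * bb⁻¹ = aa ^ (s * e) := hconj bb s hsrel e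
    have h2 : bb * aa ^ e * bb⁻¹ = aa ^ e := by
      rw [← herel]; rw [hbb2]; group
    have : aa ^ (s * e) = aa ^ e := by rw [← h1, h2]
    have := (hdvd _).mp (by rw [zpow_sub, this]; group : aa ^ (s * e - e) = 1)
    convert this using 1; ring
  -- F4 : s ≢ 1
  have hF4 : ¬ (2 : ℤ) ^ n ∣ s - 1 := by
    intro h
    have : aa ^ s = aa ^ (1 : ℤ) := hcong _ _ (by simpa using h)
    rw [zpow_one] at this
    apply hbA
    apply hcent
    have : bb * aa * bb⁻¹ = aa := by rw [hsrel, this]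
    calc bb * aa = (bb * aa * bb⁻¹) * bb := by group
      _ = aa * bb := by rw [this]
  -- s is odd
  have hs_odd : ¬ (2 : ℤ) ∣ s := by
    intro ⟨u, hu⟩
    have h2d : (2 : ℤ) ∣ s * s - 1 := dvd_trans (dvd_pow_self 2 (by omega : n ≠ 0)) hF2
    obtain ⟨c, hc⟩ := h2d
    have h1 : 2 * (u * s) - 2 * c = 1 := by rw [← hc, hu]; ring
    omega
  -- z ∈ zpowers aa
  have hz_mem : (aa ^ (2 ^ (n - 1) : ℕ)) ∈ Subgroup.zpowers aa :=
    Subgroup.pow_mem _ (Subgroup.mem_zpowers aa) _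
  -- key: an involution outside zpowers leads to contradiction via uniqueness
  have hinvol : ∀ m : ℤ, (2 : ℤ) ^ n ∣ m * (s + 1) + e → False := by
    intro m hm
    set c := bb * aa ^ m with hc
    have hc2 : c ^ 2 = 1 := by
      have : c ^ 2 = (bb * aa ^ m * bb⁻¹) * (bb ^ 2) * aa ^ m := by
        rw [hc, sq, hbb2]
        simp only [mul_assoc, inv_mul_cancel_left]
      rw [this, hconj bb s hsrel m, herel, ← zpow_add, ← zpow_add]
      exact (hdvd _).mpr (by convert hm using 1; ring)
    have hc1 : c ≠ 1 := by
      intro h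
      exact hbA (by
        have : bb = (aa ^ m)⁻¹ := by rw [eq_inv_iff_mul_eq_one]; exact h
        rw [this, ← zpow_neg]
        exact ⟨-m, rfl⟩)
    have := huniq c hc1 hc2
    apply hbA
    have : bb = aa ^ (2 ^ (n - 1) : ℕ) * (aa ^ m)⁻¹ := by
      rw [← this, hc]; group
    rw [this, ← zpow_neg]
    exact Subgroup.mul_mem _ hz_mem ⟨-m, rfl⟩
  -- parity case split on s
  obtain ⟨u, hu⟩ : ∃ u, s = 2 * u + 1 := by
    rcases Int.even_or_odd s with ⟨v, hv⟩ | ⟨v, hv⟩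
    · exact absurd ⟨v, by omega⟩ hs_odd
    · exact ⟨v, by omega⟩
  have hcop2 : ∀ w : ℤ, ¬ (2:ℤ) ∣ w → IsCoprime ((2:ℤ) ^ (n - 1)) w := by
    intro w hw
    exact (IsCoprime.pow_left (Int.prime_two.coprime_iff_not_dvd.mpr hw))
  have hsplit : (2:ℤ) ^ n = 2 ^ (n-1) * 2 := by
    rw [← pow_succ]
    congr 1
    omega
  rcases Int.even_or_odd u with ⟨u', hu'⟩ | ⟨u', hu'⟩
  · -- s ≡ 1 mod 4 : contradiction
    exfalso
    set w : ℤ := 2 * u' + 1 with hw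
    have hsw : s + 1 = 2 * w := by omega
    have hwodd : ¬ (2:ℤ) ∣ w := by intro ⟨c, hc⟩; omega
    -- 2^(n-1) ∣ (s-1) * w
    have h1 : (2:ℤ) ^ (n-1) ∣ (s - 1) * w := by
      have : (2:ℤ) ^ (n-1) * 2 ∣ ((s-1) * w) * 2 := by
        rw [← hsplit]
        calc (2:ℤ)^n ∣ (s*s - 1) := hF2
          _ = (s - 1) * (s + 1) := by ring
          _ = ((s-1) * w) * 2 := by rw [hsw]; ring
      exact (mul_dvd_mul_iff_right (by norm_num : (2:ℤ) ≠ 0)).mp this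
    have h2 : (2:ℤ) ^ (n-1) ∣ s - 1 := (hcop2 w hwodd).dvd_of_dvd_mul_right h1
    obtain ⟨v, hv⟩ := h2
    have hvodd : ¬ (2:ℤ) ∣ v := by
      intro ⟨c, hc⟩
      exact hF4 ⟨c, by rw [hv, hc, hsplit]; ring⟩
    -- e is even
    have heeven : (2:ℤ) ∣ e := by
      have h3 : (2:ℤ) * 2^(n-1) ∣ (e * v) * 2^(n-1) := by
        have he1 : e * (s - 1) = (e * v) * 2^(n-1) := by rw [hv]; ring
        have he2 : (2:ℤ) * 2^(n-1) = 2^n := by rw [hsplit]; ring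
        rw [← he1, he2]
        exact hF3
      have h4 : (2:ℤ) ∣ e * v := (mul_dvd_mul_iff_right
        (by positivity : ((2:ℤ))^(n-1) ≠ 0)).mp h3
      rcases (Int.prime_two.dvd_mul.mp h4) with h | h
      · exact h
      · exact absurd h hvodd
    obtain ⟨e', he'⟩ := heeven
    -- solve for m
    obtain ⟨x, y, hxy⟩ := hcop2 w hwodd
    refine hinvol (-e' * y) ⟨e' * x, ?_⟩
    linear_combination (-e' * y) * hsw + he' + (-2 * e') * hxy + (-e' * x) * hsplit
  · -- s ≡ 3 mod 4
    have huodd : ¬ (2:ℤ) ∣ (2 * u' + 1) := by intro ⟨c, hc⟩; omega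
    have hsu : s - 1 = 2 * (2 * u' + 1) := by omega
    have h1 : (2:ℤ) ^ (n-1) ∣ (2 * u' + 1) * (s + 1) := by
      have : (2:ℤ) ^ (n-1) * 2 ∣ ((2 * u' + 1) * (s + 1)) * 2 := by
        rw [← hsplit]
        calc (2:ℤ)^n ∣ (s*s - 1) := hF2
          _ = ((2 * u' + 1) * (s + 1)) * 2 := by linear_combination (s + 1) * hsu
      exact (mul_dvd_mul_iff_right (by norm_num : (2:ℤ) ≠ 0)).mp this
    have h2 : (2:ℤ) ^ (n-1) ∣ s + 1 := (hcop2 _ huodd).dvd_of_dvd_mul_left h1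
    -- 2^(n-1) ∣ e
    have h3 : (2:ℤ) ^ (n-1) ∣ e := by
      have h4 : (2:ℤ)^(n-1) * 2 ∣ (e * (2 * u' + 1)) * 2 := by
        have he1 : e * (s - 1) = (e * (2 * u' + 1)) * 2 := by rw [hsu]; ring
        rw [← hsplit, ← he1]
        exact hF3
      have h5 : (2:ℤ)^(n-1) ∣ e * (2 * u' + 1) :=
        (mul_dvd_mul_iff_right (by norm_num : (2:ℤ) ≠ 0)).mp h4
      exact (hcop2 _ huodd).dvd_of_dvd_mul_right h5
    obtain ⟨e'', he''⟩ := h3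
    have he''odd : ¬ (2:ℤ) ∣ e'' := by
      intro ⟨c, hc⟩
      -- then bb^2 = 1, so bb is an involution outside zpowers
      have hbb1 : bb ^ 2 = 1 := by
        rw [herel]
        exact (hdvd _).mpr ⟨c, by rw [he'', hc, hsplit]; ring⟩
      have hbne : bb ≠ 1 := fun h => hbA (h ▸ Subgroup.one_mem _)
      have := huniq bb hbne hbb1
      exact hbA (this ▸ hz_mem)
    -- second conclusion
    have hconc2 : bb ^ 2 = aa ^ (2 ^ (n - 1) : ℕ) := by
      rw [herel]
      have : aa ^ e = aa ^ ((2:ℤ) ^ (n-1)) := by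
        apply hcong
        obtain ⟨c, hc⟩ : ∃ c, e'' = 2 * c + 1 := by
          rcases Int.even_or_odd e'' with ⟨v, hv⟩ | ⟨v, hv⟩
          · exact absurd ⟨v, by omega⟩ he''odd
          · exact ⟨v, by omega⟩
        rw [he'', hc, hsplit]
        exact ⟨c, by ring⟩
      rw [this, ← zpow_natCast]
      congr 1
    -- first conclusion
    obtain ⟨d, hd⟩ := h2
    rcases Int.even_or_odd d with ⟨d', hd'⟩ | ⟨d', hd'⟩
    · -- 2^n ∣ s + 1 : done
      constructor
      · rw [hsrel]
        have : aa ^ s = aa ^ (-1 : ℤ) := by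
          apply hcong
          rw [hsplit]
          exact ⟨d', by rw [(by omega : s - -1 = s + 1), hd, hd']; ring⟩
        rw [this, zpow_neg_one]
      · exact hconc2
    · -- d odd : contradiction via bb * aa
      exfalso
      have hc2 : (bb * aa) ^ 2 = 1 := by
        have : (bb * aa) ^ 2 = (bb * aa * bb⁻¹) * (bb ^ 2) * aa := by
          rw [sq, hbb2]
          simp only [mul_assoc, inv_mul_cancel_left]
        rw [this, hsrel, hconc2, ← zpow_natCast aa (2 ^ (n-1)), ← zpow_add, ← zpow_add_one]
        apply (hdvd _).mpr
        have hcast : ((2 ^ (n - 1) : ℕ) : ℤ) = (2:ℤ) ^ (n-1) := by push_cast; rfl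
        rw [hcast, hsplit]
        refine ⟨d' + 1, ?_⟩
        have : s = 2^(n-1) * d - 1 := by omega
        rw [this, hd']; ring
      have hc1 : bb * aa ≠ 1 := by
        intro h
        exact hbA (by
          have : bb = aa⁻¹ := by rw [eq_inv_iff_mul_eq_one]; exact h
          rw [this, ← zpow_neg_one]
          exact ⟨-1, rfl⟩)
      have hz := huniq (bb * aa) hc1 hc2
      apply hbA
      have : bb = aa ^ (2 ^ (n - 1) : ℕ) * aa⁻¹ := by rw [← hz]; group
      rw [this, ← zpow_neg_one]
      exact Subgroup.mul_mem _ hz_mem ⟨-1, rfl⟩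


open Pointwise

private lemma aux_max_abelian (G : Type*) [Group G] [Finite G] (h2 : IsPGroup 2 G) :
    ∃ A : Subgroup G, A.Normal ∧ (∀ x ∈ A, ∀ y ∈ A, x * y = y * x) ∧
      (∀ x : G, (∀ y ∈ A, x * y = y * x) → x ∈ A) := by
  classical
  set S : Set (Subgroup G) := {A | A.Normal ∧ ∀ x ∈ A, ∀ y ∈ A, x * y = y * x} with hS
  have hSne : S.Nonempty := ⟨⊥, inferInstance, by
    intro x hx y hy
    rw [Subgroup.mem_bot] at hx hy
    rw [hx, hy]⟩
  obtain ⟨A, hAS, hAmax⟩ := Set.Finite.exists_maximalFor id S (Set.toFinite S) hSne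
  haveI hAnorm : A.Normal := hAS.1
  have hAab : ∀ x ∈ A, ∀ y ∈ A, x * y = y * x := hAS.2
  refine ⟨A, hAnorm, hAab, ?_⟩
  intro x hx
  by_contra hxA
  -- centralizer of A
  set C : Subgroup G := Subgroup.centralizer (A : Set G) with hC
  have hxC : x ∈ C := Subgroup.mem_centralizer_iff.mpr (fun y hy => (hx y hy).symm)
  haveI hCnorm : C.Normal := by
    constructor
    intro c hc g
    rw [Subgroup.mem_centralizer_iff] at hc ⊢
    intro y hy
    have hy' : g⁻¹ * y * g ∈ A := by
      have := hAnorm.conj_mem y hy g⁻¹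
      simpa using this
    have hcy := hc _ hy'
    have : g * ((g⁻¹ * y * g) * c) * (g⁻¹ : G) = g * (c * (g⁻¹ * y * g)) * g⁻¹ := by rw [hcy]
    calc y * (g * c * g⁻¹) = g * ((g⁻¹ * y * g) * c) * g⁻¹ := by group
      _ = g * (c * (g⁻¹ * y * g)) * g⁻¹ := this
      _ = (g * c * g⁻¹) * y := by group
  -- pass to the quotient
  set π : G →* G ⧸ A := QuotientGroup.mk' A with hπ
  have hπs : Function.Surjective π := QuotientGroup.mk'_surjective A
  set N : Subgroup (G ⧸ A) := C.map π with hN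
  haveI : N.Normal := hCnorm.map π hπs
  have hNbot : N ≠ ⊥ := by
    intro h
    have : π x ∈ N := ⟨x, hxC, rfl⟩
    rw [h, Subgroup.mem_bot] at this
    have : x ∈ A := by
      rw [← QuotientGroup.ker_mk' A]
      exact this
    exact hxA this
  obtain ⟨qc, hqcN, hqc1, hqccent⟩ := aux_normal_center (G ⧸ A) (h2.to_quotient A) N hNbot
  obtain ⟨c, hcC, hcq⟩ := hqcN
  have hcA : c ∉ A := by
    intro h
    apply hqc1
    rw [← hcq]
    have : c ∈ (QuotientGroup.mk' A).ker := by rw [QuotientGroup.ker_mk' A]; exact h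
    exact this
  -- the bigger subgroup
  set B : Subgroup G := A ⊔ Subgroup.zpowers c with hB
  have hmem : ∀ b ∈ B, ∃ y ∈ A, ∃ k : ℤ, y * c ^ k = b := by
    intro b hb
    have : b ∈ ((A : Set G) * (Subgroup.zpowers c : Set G)) := by
      rw [← Subgroup.normal_mul]
      exact hb
    obtain ⟨y, hy, w, hw, hyw⟩ := Set.mem_mul.mp this
    obtain ⟨k, hk⟩ := Subgroup.mem_zpowers_iff.mp hw
    exact ⟨y, hy, k, by rw [hk, hyw]⟩
  have hcC' : c ∈ C := hcC
  have hcomm_cA : ∀ y ∈ A, ∀ k : ℤ, Commute y (c ^ k) := by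
    intro y hy k
    have hyc : Commute y c := Subgroup.mem_centralizer_iff.mp hcC' y hy
    exact hyc.zpow_right k
  have hBab : ∀ u ∈ B, ∀ v ∈ B, u * v = v * u := by
    intro u hu v hv
    obtain ⟨y1, hy1, k1, rfl⟩ := hmem u hu
    obtain ⟨y2, hy2, k2, rfl⟩ := hmem v hv
    have c1 : Commute y1 (c ^ k2) := hcomm_cA y1 hy1 k2
    have c2 : Commute (c ^ k1) y2 := (hcomm_cA y2 hy2 k1).symm
    have cy : Commute y1 y2 := hAab y1 hy1 y2 hy2
    have ck : Commute (c ^ k1) (c ^ k2) := (Commute.refl c).zpow_zpow k1 k2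
    exact ((cy.mul_right c1).mul_left (c2.mul_right ck)).eq
  haveI hBnorm : B.Normal := by
    constructor
    intro b hb g
    obtain ⟨y, hy, k, rfl⟩ := hmem b hb
    have h1 : g * y * g⁻¹ ∈ A := hAnorm.conj_mem y hy g
    have h2' : g * c ^ k * g⁻¹ * (c ^ k)⁻¹ ∈ A := by
      rw [← QuotientGroup.ker_mk' A]
      show π (g * c ^ k * g⁻¹ * (c ^ k)⁻¹) = 1
      have hcomm : Commute (π g) (π c) := by
        have h := hqccent (π g)
        rw [← hcq] at h
        exact h
      have hck : Commute (π g) ((π c) ^ k) := hcomm.zpow_right k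
      simp only [map_mul, map_inv, map_zpow]
      rw [hck.eq]
      group
    have hsplitb : g * (y * c ^ k) * g⁻¹
        = (g * y * g⁻¹) * ((g * c ^ k * g⁻¹ * (c ^ k)⁻¹) * c ^ k) := by group
    rw [hsplitb]
    exact Subgroup.mul_mem _ (Subgroup.mem_sup_left h1)
      (Subgroup.mul_mem _ (Subgroup.mem_sup_left h2')
        (Subgroup.mem_sup_right (Subgroup.zpow_mem _ (Subgroup.mem_zpowers c) k)))
  have hABeq : A = B := le_antisymm le_sup_left (hAmax (j := B) ⟨hBnorm, hBab⟩ le_sup_left)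
  exact hcA (by
    have : c ∈ B := Subgroup.mem_sup_right (Subgroup.mem_zpowers c)
    rw [← hABeq] at this
    exact this)


/-- A finite 2-group with a unique element of order 2 is either cyclic or generalized
quaternion (here `QuaternionGroup (2^m)`, `m ≥ 1`, is the generalized quaternion group
of order `2^{m+2} ≥ 8`). -/
theorem two_group_unique_involution_cyclic_or_quaternion (G : Type) [Group G] [Finite G]
    (h2 : IsPGroup 2 G) (hinv : ∃! g : G, orderOf g = 2) :
    IsCyclic G ∨ ∃ m : ℕ, 1 ≤ m ∧ Nonempty (G ≃* QuaternionGroup (2 ^ m)) := by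
  classical
  haveI : Fact (Nat.Prime 2) := ⟨Nat.prime_two⟩
  obtain ⟨z0, hz0, hz0u⟩ := hinv
  have hu : ∀ x y : G, x ^ 2 = 1 → y ^ 2 = 1 → x = 1 ∨ y = 1 ∨ x = y := by
    intro x y hx hy
    by_cases hx1 : x = 1
    · exact Or.inl hx1
    by_cases hy1 : y = 1
    · exact Or.inr (Or.inl hy1)
    refine Or.inr (Or.inr ?_)
    rw [hz0u x (orderOf_eq_prime hx hx1), hz0u y (orderOf_eq_prime hy hy1)]
  by_cases habel : ∀ x y : G, x * y = y * x
  · exact Or.inl (aux_comm_cyclic G h2 habel hu)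
  right
  obtain ⟨A, hAnorm, hAab, hAcent⟩ := aux_max_abelian G h2
  have hAcyc : IsCyclic A := by
    apply aux_comm_cyclic A (h2.to_subgroup A)
    · intro x y; exact Subtype.ext (hAab x x.2 y y.2)
    · intro x y hx hy
      have hx' : (x : G) ^ 2 = 1 := by exact_mod_cast congrArg Subtype.val hx
      have hy' : (y : G) ^ 2 = 1 := by exact_mod_cast congrArg Subtype.val hy
      rcases hu x y hx' hy' with h | h | h
      · exact Or.inl (Subtype.ext h)
      · exact Or.inr (Or.inl (Subtype.ext h))
      · exact Or.inr (Or.inr (Subtype.ext h))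
  obtain ⟨g0, hg0⟩ := hAcyc.exists_generator
  set aa : G := (g0 : G) with haa
  have hAzp : A = Subgroup.zpowers aa := by
    apply le_antisymm
    · intro v hv
      obtain ⟨k, hk⟩ := Subgroup.mem_zpowers_iff.mp (hg0 ⟨v, hv⟩)
      exact Subgroup.mem_zpowers_iff.mpr ⟨k, by simpa using congrArg Subtype.val hk⟩
    · intro v hv
      obtain ⟨k, hk⟩ := Subgroup.mem_zpowers_iff.mp hv
      rw [← hk]
      exact Subgroup.zpow_mem A g0.2 k
  obtain ⟨kn, hkn⟩ := h2 aa
  obtain ⟨n, hnle, haord⟩ := (Nat.dvd_prime_pow Nat.prime_two).mp (orderOf_dvd_of_pow_eq_one hkn)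
  have hcent : ∀ x : G, x * aa = aa * x → x ∈ Subgroup.zpowers aa := by
    intro x hxaa
    rw [← hAzp]
    apply hAcent
    intro y hy
    rw [hAzp] at hy
    obtain ⟨k, hk⟩ := Subgroup.mem_zpowers_iff.mp hy
    rw [← hk]
    have hcom : Commute x aa := hxaa
    exact (hcom.zpow_right k).eq
  have hnormzp : (Subgroup.zpowers aa).Normal := hAzp ▸ hAnorm
  haveI := hnormzp
  -- n ≥ 2
  have hn2 : 2 ≤ n := by
    by_contra hlt
    push_neg at hlt
    apply habel
    have hall : ∀ g : G, g ∈ Subgroup.zpowers aa := by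
      intro g
      apply hcent
      interval_cases n
      · have : aa = 1 := orderOf_eq_one_iff.mp (by rw [haord]; norm_num)
        rw [this, one_mul, mul_one]
      · have h2eq : orderOf aa = 2 := by rw [haord]; norm_num
        have haa1 : aa ≠ 1 := by
          intro h
          rw [h, orderOf_one] at h2eq
          norm_num at h2eq
        have hzp1 : aa ^ (2 : ℤ) = 1 := by
          have h := pow_orderOf_eq_one aa
          rw [h2eq] at h
          exact_mod_cast h
        have h1 : g * aa * g⁻¹ ∈ Subgroup.zpowers aa :=
          hnormzp.conj_mem aa (Subgroup.mem_zpowers aa) g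
        obtain ⟨k, hk⟩ := Subgroup.mem_zpowers_iff.mp h1
        rcases Int.even_or_odd k with ⟨v, hv⟩ | ⟨v, hv⟩
        · exfalso
          apply haa1
          have hk1 : aa ^ k = 1 := by
            rw [show k = 2 * v by omega, zpow_mul, hzp1, one_zpow]
          rw [hk1] at hk
          calc aa = g⁻¹ * (g * aa * g⁻¹) * g := by group
            _ = g⁻¹ * 1 * g := by rw [← hk]
            _ = 1 := by group
        · have hk1 : aa ^ k = aa := by
            rw [show k = 2 * v + 1 by omega, zpow_add, zpow_mul, hzp1, one_zpow, one_mul, zpow_one]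
          rw [hk1] at hk
          calc g * aa = (g * aa * g⁻¹) * g := by group
            _ = aa * g := by rw [← hk]
    exact fun x y => hAab x (by rw [hAzp]; exact hall x) y (by rw [hAzp]; exact hall y)
  -- the unique involution is aa ^ 2^(n-1)
  have hzord : orderOf (aa ^ (2 ^ (n - 1) : ℕ)) = 2 := by
    apply orderOf_eq_prime
    · rw [← pow_mul, ← pow_succ, Nat.sub_add_cancel (by omega : 1 ≤ n), ← haord,
        pow_orderOf_eq_one]
    · intro h
      have hd := orderOf_dvd_of_pow_eq_one h
      rw [haord] at hd
      have hle := Nat.le_of_dvd (by positivity) hd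
      have hlt : (2 : ℕ) ^ (n - 1) < 2 ^ n := Nat.pow_lt_pow_right (by norm_num) (by omega)
      omega
  have huniq : ∀ x : G, x ≠ 1 → x ^ 2 = 1 → x = aa ^ (2 ^ (n - 1) : ℕ) := by
    intro x hx1 hx2
    rw [hz0u x (orderOf_eq_prime hx2 hx1), hz0u _ hzord]
  -- quotient
  set Zp : Subgroup G := Subgroup.zpowers aa with hZp
  set π : G →* G ⧸ Zp := QuotientGroup.mk' Zp with hπ
  have hπs : Function.Surjective π := QuotientGroup.mk'_surjective Zp
  have hker : ∀ w : G, π w = 1 ↔ w ∈ Zp := by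
    intro w
    constructor
    · intro h
      have hw : w ∈ (QuotientGroup.mk' Zp).ker := h
      rwa [QuotientGroup.ker_mk'] at hw
    · intro h
      have hw : w ∈ (QuotientGroup.mk' Zp).ker := by rwa [QuotientGroup.ker_mk']
      exact hw
  have hQ2 : IsPGroup 2 (G ⧸ Zp) := h2.to_quotient Zp
  obtain ⟨g1, hg1⟩ : ∃ g : G, g ∉ Zp := by
    by_contra h
    push_neg at h
    exact habel fun x y => hAab x (by rw [hAzp]; exact h x) y (by rw [hAzp]; exact h y)
  obtain ⟨u, hu1, hu2⟩ : ∃ u : G ⧸ Zp, u ≠ 1 ∧ u ^ 2 = 1 := by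
    have hg1' : π g1 ≠ 1 := fun h => hg1 ((hker g1).mp h)
    obtain ⟨k, hk⟩ := hQ2 (π g1)
    obtain ⟨j, hjle, hj⟩ := (Nat.dvd_prime_pow Nat.prime_two).mp (orderOf_dvd_of_pow_eq_one hk)
    have hj1 : 1 ≤ j := by
      rcases Nat.eq_zero_or_pos j with h | h
      · exact absurd (orderOf_eq_one_iff.mp (by rw [hj, h, pow_zero])) hg1'
      · exact h
    refine ⟨(π g1) ^ (2 ^ (j - 1) : ℕ), ?_, ?_⟩
    · intro h
      have hd := orderOf_dvd_of_pow_eq_one h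
      rw [hj] at hd
      have hle := Nat.le_of_dvd (by positivity) hd
      have hlt : (2 : ℕ) ^ (j - 1) < 2 ^ j := Nat.pow_lt_pow_right (by norm_num) (by omega)
      omega
    · rw [← pow_mul, ← pow_succ, Nat.sub_add_cancel hj1, ← hj, pow_orderOf_eq_one]
  obtain ⟨bb, hbb⟩ := hπs u
  have hbbA : bb ∉ Zp := fun h => hu1 (by rw [← hbb]; exact (hker bb).mpr h)
  have hbb2 : bb ^ 2 ∈ Zp := by
    apply (hker _).mp
    rw [map_pow, hbb]
    exact hu2
  obtain ⟨hbinv, hbsq⟩ := aux_inverts aa n hn2 haord hcent hnormzp huniq bb hbbA hbb2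
  -- every element of the quotient squares to 1
  have horder4 : ∀ q : G ⧸ Zp, q ^ 2 = 1 := by
    intro q
    by_contra hq2
    obtain ⟨k, hk⟩ := hQ2 q
    obtain ⟨j, hjle, hj⟩ := (Nat.dvd_prime_pow Nat.prime_two).mp (orderOf_dvd_of_pow_eq_one hk)
    have hj2 : 2 ≤ j := by
      by_contra h
      push_neg at h
      interval_cases j
      · rw [pow_zero] at hj
        exact hq2 (by rw [orderOf_eq_one_iff.mp hj]; simp)
      · rw [pow_one] at hj
        exact hq2 (hj ▸ pow_orderOf_eq_one q)
    have hw2 : (q ^ (2 ^ (j - 2) : ℕ)) ^ 2 ≠ 1 := by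
      intro h
      rw [← pow_mul] at h
      have hdv := orderOf_dvd_of_pow_eq_one h
      rw [hj] at hdv
      have hle := Nat.le_of_dvd (by positivity) hdv
      have he : (2 : ℕ) ^ (j - 2) * 2 = 2 ^ (j - 1) := by
        rw [← pow_succ]; congr 1; omega
      rw [he] at hle
      have hlt : (2 : ℕ) ^ (j - 1) < 2 ^ j := Nat.pow_lt_pow_right (by norm_num) (by omega)
      omega
    have hw4 : (q ^ (2 ^ (j - 2) : ℕ)) ^ 4 = 1 := by
      rw [← pow_mul]
      have he : (2 : ℕ) ^ (j - 2) * 4 = 2 ^ j := by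
        rw [show (4 : ℕ) = 2 ^ 2 by norm_num, ← pow_add]; congr 1; omega
      rw [he, ← hj, pow_orderOf_eq_one]
    obtain ⟨g, hg⟩ := hπs (q ^ (2 ^ (j - 2) : ℕ))
    have hgsqA : g ^ 2 ∉ Zp := by
      intro h
      exact hw2 (by rw [← hg, ← map_pow]; exact (hker _).mpr h)
    have hgsq2 : (g ^ 2) ^ 2 ∈ Zp := by
      apply (hker _).mp
      rw [map_pow, map_pow, hg, ← pow_mul]
      rw [show (2 * 2 : ℕ) = 4 from rfl]
      exact hw4
    obtain ⟨hinv2, -⟩ := aux_inverts aa n hn2 haord hcent hnormzp huniq (g ^ 2) hgsqA hgsq2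
    obtain ⟨t, ht⟩ := Subgroup.mem_zpowers_iff.mp
      (hnormzp.conj_mem aa (Subgroup.mem_zpowers aa) g)
    have hconj2 : (g ^ 2) * aa * (g ^ 2)⁻¹ = aa ^ (t * t) := by
      have h1 : g * aa ^ t * g⁻¹ = aa ^ (t * t) := by
        rw [← conj_zpow, ← ht, ← zpow_mul, mul_comm]
      calc (g ^ 2) * aa * (g ^ 2)⁻¹ = g * (g * aa * g⁻¹) * g⁻¹ := by rw [sq]; group
        _ = g * aa ^ t * g⁻¹ := by rw [← ht]
        _ = aa ^ (t * t) := h1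
    have hneg : aa ^ (t * t) = aa⁻¹ := by rw [← hconj2, hinv2]
    have hdvd4 : (4 : ℤ) ∣ t * t + 1 := by
      have h1 : aa ^ (t * t + 1) = 1 := by rw [zpow_add, hneg, zpow_one]; group
      have h2' : (((2 ^ n : ℕ) : ℤ)) ∣ t * t + 1 := by
        rw [← haord]
        exact orderOf_dvd_iff_zpow_eq_one.mpr h1
      refine dvd_trans ?_ h2'
      have hc : (((2 ^ n : ℕ) : ℤ)) = 2 ^ n := by push_cast; rfl
      rw [hc]
      calc (4 : ℤ) = 2 ^ 2 := by norm_num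
        _ ∣ 2 ^ n := pow_dvd_pow 2 hn2
    obtain ⟨cc, hcc⟩ := hdvd4
    rcases Int.even_or_odd t with ⟨v, hv⟩ | ⟨v, hv⟩
    · have h3 : 4 * (v * v) + 1 = 4 * cc := by rw [← hcc, hv]; ring
      have : (4 : ℤ) ∣ 1 := ⟨cc - v * v, by linarith⟩
      norm_num at this
    · have h3 : 4 * (v * v) + 4 * v + 2 = 4 * cc := by rw [← hcc, hv]; ring
      have : (4 : ℤ) ∣ 2 := ⟨cc - v * v - v, by linarith⟩
      norm_num at this
  -- the quotient has exactly two elements : 1 and π bb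
  have hQonly : ∀ q : G ⧸ Zp, q = 1 ∨ q = π bb := by
    intro q
    by_cases hq1 : q = 1
    · exact Or.inl hq1
    right
    obtain ⟨cq, hcq⟩ := hπs q
    have hcqA : cq ∉ Zp := fun h => hq1 (by rw [← hcq]; exact (hker cq).mpr h)
    have hcq2 : cq ^ 2 ∈ Zp := (hker _).mp (by rw [map_pow, hcq]; exact horder4 q)
    obtain ⟨hcinv, -⟩ := aux_inverts aa n hn2 haord hcent hnormzp huniq cq hcqA hcq2
    have h1 : cq * aa * cq⁻¹ = bb * aa * bb⁻¹ := by rw [hcinv, hbinv]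
    have h2' : bb⁻¹ * (bb * aa * bb⁻¹) * bb = aa := by group
    have hd : (bb⁻¹ * cq) * aa = aa * (bb⁻¹ * cq) := by
      calc (bb⁻¹ * cq) * aa = bb⁻¹ * (cq * aa * cq⁻¹) * cq := by group
        _ = bb⁻¹ * (bb * aa * bb⁻¹) * cq := by rw [h1]
        _ = (bb⁻¹ * (bb * aa * bb⁻¹) * bb) * (bb⁻¹ * cq) := by group
        _ = aa * (bb⁻¹ * cq) := by rw [h2']
    have hmem := hcent _ hd
    have hone : π (bb⁻¹ * cq) = 1 := (hker _).mpr hmem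
    rw [map_mul, map_inv, hcq] at hone
    have := inv_mul_eq_one.mp hone
    exact this.symm
  -- build the isomorphism with the quaternion group
  set m : ℕ := n - 1 with hm
  have hm1 : 1 ≤ m := by omega
  have hMN : 2 * 2 ^ m = 2 ^ n := by
    rw [hm, mul_comm, ← pow_succ, Nat.sub_add_cancel (by omega : 1 ≤ n)]
  haveI : NeZero (2 * 2 ^ m) := ⟨by positivity⟩
  have horder : orderOf aa = 2 * 2 ^ m := by rw [haord, hMN]
  have key : ∀ (c : ZMod (2 * 2 ^ m)) (x : ℤ), ((x : ZMod (2 * 2 ^ m)) = c) →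
      aa ^ ((c.val : ℤ)) = aa ^ x := by
    intro c x hx
    rw [zpow_eq_zpow_iff_modEq, horder]
    have h1 : ((c.val : ℤ) : ZMod (2 * 2 ^ m)) = ((x : ℤ) : ZMod (2 * 2 ^ m)) := by
      rw [hx]
      push_cast
      simp [ZMod.natCast_val, ZMod.cast_id]
    exact (ZMod.intCast_eq_intCast_iff _ _ _).mp h1
  have hbinvx : ∀ x : ℤ, aa ^ x * bb = bb * aa ^ (-x) := by
    intro x
    have h1 : (bb * aa * bb⁻¹) ^ (-x) = bb * aa ^ (-x) * bb⁻¹ := conj_zpow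
    rw [hbinv] at h1
    have h2' : (aa⁻¹ : G) ^ (-x) = aa ^ x := by
      rw [inv_zpow, ← zpow_neg, neg_neg]
    rw [h2'] at h1
    calc aa ^ x * bb = (bb * aa ^ (-x) * bb⁻¹) * bb := by rw [h1]
      _ = bb * aa ^ (-x) := by group
  have hbsqz : bb ^ 2 = aa ^ ((2 : ℤ) ^ m) := by
    rw [hbsq, ← zpow_natCast]
    congr 1
  refine ⟨m, hm1, ⟨(MulEquiv.ofBijective (MonoidHom.mk'
    (fun x : QuaternionGroup (2 ^ m) => match x with
      | QuaternionGroup.a i => aa ^ (i.val : ℤ)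
      | QuaternionGroup.xa i => bb * aa ^ (i.val : ℤ)) ?_) ⟨?_, ?_⟩).symm⟩⟩
  · -- multiplicative
    rintro (i | i) (j | j)
    · show aa ^ (((i + j).val : ℤ)) = aa ^ (i.val : ℤ) * aa ^ (j.val : ℤ)
      rw [← zpow_add]
      exact key (i + j) _ (by push_cast [ZMod.natCast_val, ZMod.cast_id]; ring)
    · show bb * aa ^ (((j - i).val : ℤ)) = aa ^ (i.val : ℤ) * (bb * aa ^ (j.val : ℤ))
      rw [key (j - i) ((j.val : ℤ) - (i.val : ℤ))
        (by push_cast [ZMod.natCast_val, ZMod.cast_id]; ring)]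
      calc bb * aa ^ ((j.val : ℤ) - (i.val : ℤ))
          = bb * (aa ^ (-(i.val : ℤ)) * aa ^ (j.val : ℤ)) := by
            rw [← zpow_add]; congr 1; ring
        _ = (bb * aa ^ (-(i.val : ℤ))) * aa ^ (j.val : ℤ) := by rw [mul_assoc]
        _ = (aa ^ (i.val : ℤ) * bb) * aa ^ (j.val : ℤ) := by rw [← hbinvx]
        _ = aa ^ (i.val : ℤ) * (bb * aa ^ (j.val : ℤ)) := by rw [mul_assoc]
    · show bb * aa ^ (((i + j).val : ℤ)) = (bb * aa ^ (i.val : ℤ)) * aa ^ (j.val : ℤ)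
      rw [key (i + j) ((i.val : ℤ) + (j.val : ℤ))
        (by push_cast [ZMod.natCast_val, ZMod.cast_id]; ring)]
      rw [mul_assoc, ← zpow_add]
    · show aa ^ (((((2 ^ m : ℕ) : ZMod (2 * 2 ^ m)) + j - i).val : ℤ))
        = (bb * aa ^ (i.val : ℤ)) * (bb * aa ^ (j.val : ℤ))
      rw [key _ ((2 : ℤ) ^ m + ((j.val : ℤ) - (i.val : ℤ)))
        (by push_cast [ZMod.natCast_val, ZMod.cast_id]; ring)]
      calc aa ^ ((2 : ℤ) ^ m + ((j.val : ℤ) - (i.val : ℤ)))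
          = aa ^ ((2 : ℤ) ^ m) * aa ^ ((j.val : ℤ) - (i.val : ℤ)) := zpow_add aa _ _
        _ = (bb * bb) * (aa ^ (-(i.val : ℤ)) * aa ^ (j.val : ℤ)) := by
            rw [← hbsqz, sq, ← zpow_add]
            congr 2
            ring
        _ = bb * (bb * aa ^ (-(i.val : ℤ))) * aa ^ (j.val : ℤ) := by group
        _ = bb * (aa ^ (i.val : ℤ) * bb) * aa ^ (j.val : ℤ) := by rw [← hbinvx]
        _ = (bb * aa ^ (i.val : ℤ)) * (bb * aa ^ (j.val : ℤ)) := by group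
  · -- injective
    have hvaleq : ∀ i j : ZMod (2 * 2 ^ m), aa ^ (i.val : ℤ) = aa ^ (j.val : ℤ) → i = j := by
      intro i j h
      have h1 := zpow_eq_zpow_iff_modEq.mp h
      rw [horder] at h1
      have h2' : ((i.val : ℤ) : ZMod (2 * 2 ^ m)) = ((j.val : ℤ) : ZMod (2 * 2 ^ m)) :=
        (ZMod.intCast_eq_intCast_iff _ _ _).mpr h1
      push_cast [ZMod.natCast_val, ZMod.cast_id] at h2'
      exact h2'
    rintro (i | i) (j | j) h
    · rw [hvaleq i j h]
    · exfalso
      apply hbbA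
      have h' : aa ^ (i.val : ℤ) = bb * aa ^ (j.val : ℤ) := h
      have hb : bb = aa ^ (i.val : ℤ) * (aa ^ (j.val : ℤ))⁻¹ := by
        rw [h']; group
      rw [hb]
      exact Subgroup.mul_mem _ (Subgroup.zpow_mem _ (Subgroup.mem_zpowers aa) _)
        (Subgroup.inv_mem _ (Subgroup.zpow_mem _ (Subgroup.mem_zpowers aa) _))
    · exfalso
      apply hbbA
      have h' : bb * aa ^ (i.val : ℤ) = aa ^ (j.val : ℤ) := h
      have hb : bb = aa ^ (j.val : ℤ) * (aa ^ (i.val : ℤ))⁻¹ := by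
        rw [← h']; group
      rw [hb]
      exact Subgroup.mul_mem _ (Subgroup.zpow_mem _ (Subgroup.mem_zpowers aa) _)
        (Subgroup.inv_mem _ (Subgroup.zpow_mem _ (Subgroup.mem_zpowers aa) _))
    · have h' : bb * aa ^ (i.val : ℤ) = bb * aa ^ (j.val : ℤ) := h
      have := mul_left_cancel h'
      rw [hvaleq i j this]
  · -- surjective
    intro g
    rcases hQonly (π g) with h | h
    · have hgZ : g ∈ Zp := (hker g).mp h
      obtain ⟨x, hx⟩ := Subgroup.mem_zpowers_iff.mp hgZ
      refine ⟨QuaternionGroup.a ((x : ZMod (2 * 2 ^ m))), ?_⟩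
      show aa ^ ((((x : ZMod (2 * 2 ^ m))).val : ℤ)) = g
      rw [key _ x rfl, hx]
    · have h1 : π (bb⁻¹ * g) = 1 := by rw [map_mul, map_inv, h]; group
      have hgZ : bb⁻¹ * g ∈ Zp := (hker _).mp h1
      obtain ⟨x, hx⟩ := Subgroup.mem_zpowers_iff.mp hgZ
      refine ⟨QuaternionGroup.xa ((x : ZMod (2 * 2 ^ m))), ?_⟩
      show bb * aa ^ ((((x : ZMod (2 * 2 ^ m))).val : ℤ)) = g
      rw [key _ x rfl, hx]
      group
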